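/- Let (X,d) be an unbounded metric space, fix a ∈ X, and on the one-point compactification Ẋ = X ∪ {∞} define d_a(x,y) = d(x,y)/((1+d(x,a))(1+d(y,a))) for x,y ∈ X, d_a(x,∞) = 1/(1+d(x,a)), and d_a(∞,∞) = 0. Define d̂_a(x,y) as the infimum of Σ_{j=1}^k d_a(x_j, x_{j-1}) over all finite chains x = x_0, x_1, …, x_k = y in Ẋ. Then d̂_a is a metric on Ẋ and (1/4) d_a(x,y) ≤ d̂_a(x,y) ≤ d_a(x,y) for all x,y ∈ Ẋ. -/

import Mathlib

open Metric Set

/-- The sphericalization quasimetric `d_a` on `Ẋ = X ∪ {∞}` (with `none = ∞`). -/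
noncomputable def da {X : Type*} [MetricSpace X] (a : X) : Option X → Option X → ℝ
  | some x, some y => dist x y / ((1 + dist x a) * (1 + dist y a))
  | some x, none => (1 + dist x a)⁻¹
  | none, some y => (1 + dist y a)⁻¹
  | none, none => 0

/-- The sum `Σ d_a(x_j, x_{j-1})` along a finite chain. -/
noncomputable def chainSum {X : Type*} [MetricSpace X] (a : X) : List (Option X) → ℝ
  | x :: y :: l => da a x y + chainSum a (y :: l)
  | _ => 0

/-- The sphericalization metric `d̂_a`: the infimum of `Σ d_a(x_j,x_{j-1})`
over all finite chains from `x` to `y` in `Ẋ`. -/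
noncomputable def dhat {X : Type*} [MetricSpace X] (a : X) (x y : Option X) : ℝ :=
  sInf { s | ∃ l : List (Option X), (x :: l).getLast? = some y ∧ s = chainSum a (x :: l) }

section Aux

variable {X : Type*} [MetricSpace X] (a : X)

/-- The auxiliary "height" function `t(x) = 1/(1+d(x,a))`, `t(∞) = 0`. -/
noncomputable def tf (a : X) : Option X → ℝ
  | some x => (1 + dist x a)⁻¹
  | none => 0

lemma one_add_dist_pos (x : X) : (0:ℝ) < 1 + dist x a := by positivity

lemma tf_nonneg : ∀ u : Option X, 0 ≤ tf a u
  | some x => by simp [tf]; positivity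
  | none => le_refl _

lemma da_nonneg : ∀ u v : Option X, 0 ≤ da a u v
  | some x, some y => by
      have := one_add_dist_pos a x; have := one_add_dist_pos a y
      simp only [da]; positivity
  | some x, none => by simp only [da]; positivity
  | none, some y => by simp only [da]; positivity
  | none, none => le_refl _

lemma da_symm : ∀ u v : Option X, da a u v = da a v u
  | some x, some y => by simp only [da, dist_comm x y, mul_comm]
  | some x, none => rfl
  | none, some y => rfl
  | none, none => rfl

lemma da_self : ∀ u : Option X, da a u u = 0
  | some x => by simp [da]
  | none => rfl

lemma da_eq_zero : ∀ u v : Option X, da a u v = 0 → u = v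
  | some x, some y, h => by
      have hx := one_add_dist_pos a x; have hy := one_add_dist_pos a y
      simp only [da, div_eq_zero_iff] at h
      rcases h with h | h
      · simp [dist_eq_zero.mp h]
      · have hp : (0:ℝ) < (1 + dist x a) * (1 + dist y a) := by positivity
        exact absurd h hp.ne'
  | some x, none, h => by
      have hp : (0:ℝ) < da a (some x) none := by
        have := one_add_dist_pos a x
        simp only [da]; positivity
      exact absurd h hp.ne'
  | none, some y, h => by
      have hp : (0:ℝ) < da a none (some y) := by
        have := one_add_dist_pos a y
        simp only [da]; positivity
      exact absurd h hp.ne'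
  | none, none, _ => rfl

lemma da_some_some (x y : X) :
    da a (some x) (some y) = dist x y * tf a (some x) * tf a (some y) := by
  simp only [da, tf, div_eq_mul_inv, mul_inv, mul_assoc]

lemma abs_tf_sub_le : ∀ u v : Option X, |tf a u - tf a v| ≤ da a u v
  | some x, some y => by
      have hx := one_add_dist_pos a x; have hy := one_add_dist_pos a y
      simp only [tf, da]
      have hP : (0:ℝ) < (1 + dist x a) * (1 + dist y a) := by positivity
      rw [inv_sub_inv hx.ne' hy.ne', abs_div, abs_of_pos hP]
      gcongr
      calc |1 + dist y a - (1 + dist x a)| = |dist y a - dist x a| := by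
            congr 1; ring
        _ ≤ dist y x := abs_dist_sub_le y x a
        _ = dist x y := dist_comm y x
  | some x, none => by
      simp only [tf, da, sub_zero]
      rw [abs_of_nonneg (by positivity)]
  | none, some y => by
      simp only [tf, da, zero_sub, abs_neg]
      rw [abs_of_nonneg (by positivity)]
  | none, none => by simp [tf, da]

lemma da_le_tf_add : ∀ u v : Option X, da a u v ≤ tf a u + tf a v
  | some x, some y => by
      have hx := one_add_dist_pos a x; have hy := one_add_dist_pos a y
      simp only [tf, da]
      rw [div_le_iff₀ (by positivity)]
      have h := dist_triangle_right x y a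
      have e : ((1 + dist x a)⁻¹ + (1 + dist y a)⁻¹) * ((1 + dist x a) * (1 + dist y a))
          = (1 + dist y a) + (1 + dist x a) := by
        field_simp
      rw [e]; linarith
  | some x, none => by simp [tf, da]
  | none, some y => by simp [tf, da]
  | none, none => by simp [tf, da]

@[simp] lemma chainSum_nil : chainSum a ([] : List (Option X)) = 0 := rfl
@[simp] lemma chainSum_single (x : Option X) : chainSum a [x] = 0 := rfl
@[simp] lemma chainSum_cons (x y : Option X) (l : List (Option X)) :
    chainSum a (x :: y :: l) = da a x y + chainSum a (y :: l) := rfl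

lemma chainSum_nonneg : ∀ l : List (Option X), 0 ≤ chainSum a l
  | [] => le_refl _
  | [_] => le_refl _
  | x :: y :: l => add_nonneg (da_nonneg a x y) (chainSum_nonneg (y :: l))

/-- Telescoping: the difference of heights of the endpoints is at most the chain sum. -/
lemma abs_tf_endpoints_le : ∀ (l : List (Option X)) (x y : Option X),
    (x :: l).getLast? = some y → |tf a x - tf a y| ≤ chainSum a (x :: l)
  | [], x, y, h => by
      simp only [List.getLast?_singleton, Option.some.injEq] at h
      simp [← h]
  | z :: l, x, y, h => by
      rw [List.getLast?_cons_cons] at h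
      calc |tf a x - tf a y| ≤ |tf a x - tf a z| + |tf a z - tf a y| := abs_sub_le _ _ _
        _ ≤ da a x z + chainSum a (z :: l) :=
            add_le_add (abs_tf_sub_le a x z) (abs_tf_endpoints_le l z y h)
        _ = chainSum a (x :: z :: l) := (chainSum_cons a x z l).symm

/-- Every chain element has height within the chain sum of the first element's height. -/
lemma abs_tf_head_le : ∀ (l : List (Option X)) (x u : Option X),
    u ∈ x :: l → |tf a x - tf a u| ≤ chainSum a (x :: l)
  | [], x, u, h => by
      simp only [List.mem_singleton] at h
      simp [h]
  | z :: l, x, u, h => by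
      rcases List.mem_cons.mp h with h | h
      · subst h
        simp only [sub_self, abs_zero]
        exact chainSum_nonneg a _
      · calc |tf a x - tf a u| ≤ |tf a x - tf a z| + |tf a z - tf a u| := abs_sub_le _ _ _
          _ ≤ da a x z + chainSum a (z :: l) :=
              add_le_add (abs_tf_sub_le a x z) (abs_tf_head_le l z u h)
          _ = chainSum a (x :: z :: l) := (chainSum_cons a x z l).symm

/-- Every chain element has height within the chain sum of the last element's height. -/
lemma abs_tf_last_le : ∀ (l : List (Option X)) (x y u : Option X),
    (x :: l).getLast? = some y → u ∈ x :: l → |tf a u - tf a y| ≤ chainSum a (x :: l)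
  | [], x, y, u, hl, hu => by
      simp only [List.getLast?_singleton, Option.some.injEq] at hl
      simp only [List.mem_singleton] at hu
      subst hl; subst hu; simp
  | z :: l, x, y, u, hl, hu => by
      rw [List.getLast?_cons_cons] at hl
      rcases List.mem_cons.mp hu with h | h
      · subst h
        calc |tf a u - tf a y| ≤ |tf a u - tf a z| + |tf a z - tf a y| := abs_sub_le _ _ _
          _ ≤ da a u z + chainSum a (z :: l) :=
              add_le_add (abs_tf_sub_le a u z) (abs_tf_endpoints_le a l z y hl)
          _ = chainSum a (u :: z :: l) := (chainSum_cons a u z l).symm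
      · calc |tf a u - tf a y| ≤ chainSum a (z :: l) := abs_tf_last_le l z y u hl h
          _ ≤ chainSum a (x :: z :: l) := by
              rw [chainSum_cons]; linarith [da_nonneg a x z]

/-- If all chain elements have height `≥ c > 0`, the chain consists of points of `X`
and the chain sum dominates `c² · d(x,y)`. -/
lemma chainSum_ge_sq_dist : ∀ (l : List (Option X)) (x y : X) (c : ℝ), 0 < c →
    ((some x :: l).getLast? = some (some y)) →
    (∀ u ∈ some x :: l, c ≤ tf a u) →
    c * c * dist x y ≤ chainSum a (some x :: l)
  | [], x, y, c, hc, hl, _ => by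
      simp only [List.getLast?_singleton, Option.some.injEq] at hl
      subst hl
      simp
  | z :: l, x, y, c, hc, hl, hall => by
      obtain ⟨z', rfl⟩ : ∃ z', z = some z' := by
        match z with
        | some z' => exact ⟨z', rfl⟩
        | none =>
          exfalso
          have := hall none (List.mem_cons.mpr (Or.inr (List.mem_cons_self)))
          simp only [tf] at this; linarith
      rw [List.getLast?_cons_cons] at hl
      have IH := chainSum_ge_sq_dist l z' y c hc hl
        (fun u hu => hall u (List.mem_cons.mpr (Or.inr hu)))
      have htx : c ≤ tf a (some x) := hall _ (List.mem_cons_self)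
      have htz : c ≤ tf a (some z') :=
        hall _ (List.mem_cons.mpr (Or.inr (List.mem_cons_self)))
      have hda : c * c * dist x z' ≤ da a (some x) (some z') := by
        rw [da_some_some]
        have hcc : c * c ≤ tf a (some x) * tf a (some z') :=
          mul_le_mul htx htz hc.le (tf_nonneg a _)
        have h0 : (0:ℝ) ≤ dist x z' := dist_nonneg
        calc c * c * dist x z' = dist x z' * (c * c) := by ring
          _ ≤ dist x z' * (tf a (some x) * tf a (some z')) :=
              mul_le_mul_of_nonneg_left hcc h0
          _ = dist x z' * tf a (some x) * tf a (some z') := by ring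
      calc c * c * dist x y ≤ c * c * (dist x z' + dist z' y) := by
            have := dist_triangle x z' y; nlinarith
        _ = c * c * dist x z' + c * c * dist z' y := by ring
        _ ≤ da a (some x) (some z') + chainSum a (some z' :: l) := add_le_add hda IH
        _ = chainSum a (some x :: some z' :: l) := rfl

/-- The key comparison: every chain sum dominates `d_a(x,y)/4`. -/
lemma da_le_four_chainSum (l : List (Option X)) (x y : Option X)
    (hl : (x :: l).getLast? = some y) : da a x y ≤ 4 * chainSum a (x :: l) := by
  set S := chainSum a (x :: l) with hSdef
  have hS0 : 0 ≤ S := chainSum_nonneg a _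
  set M := max (tf a x) (tf a y) with hMdef
  have htxM : tf a x ≤ M := le_max_left _ _
  have htyM : tf a y ≤ M := le_max_right _ _
  by_cases hcase : M ≤ 2 * S
  · calc da a x y ≤ tf a x + tf a y := da_le_tf_add a x y
      _ ≤ M + M := add_le_add htxM htyM
      _ ≤ 4 * S := by linarith
  · push_neg at hcase
    have hall : ∀ u ∈ x :: l, M - S ≤ tf a u := by
      intro u hu
      rcases max_cases (tf a x) (tf a y) with ⟨hM, _⟩ | ⟨hM, _⟩
      · have h := abs_sub_le_iff.mp (abs_tf_head_le a l x u hu)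
        rw [hMdef, hM]; linarith [h.1]
      · have h := abs_sub_le_iff.mp (abs_tf_last_le a l x y u hl hu)
        rw [hMdef, hM]; linarith [h.2]
    have hc : 0 < M - S := by linarith
    obtain ⟨x', rfl⟩ : ∃ x', x = some x' := by
      match x with
      | some x' => exact ⟨x', rfl⟩
      | none =>
        exfalso
        have := hall none (List.mem_cons_self)
        simp only [tf] at this; linarith
    obtain ⟨y', rfl⟩ : ∃ y', y = some y' := by
      match y with
      | some y' => exact ⟨y', rfl⟩
      | none =>
        exfalso
        have := hall none (List.mem_of_getLast? hl)
        simp only [tf] at this; linarith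
    have key := chainSum_ge_sq_dist a l x' y' (M - S) hc hl hall
    have hM2 : M ≤ 2 * (M - S) := by linarith
    have hd0 : (0:ℝ) ≤ dist x' y' := dist_nonneg
    rw [da_some_some]
    have h1 : tf a (some x') * tf a (some y') ≤ (2 * (M - S)) * (2 * (M - S)) :=
      mul_le_mul (htxM.trans hM2) (htyM.trans hM2) (tf_nonneg a _) (by positivity)
    calc dist x' y' * tf a (some x') * tf a (some y')
        = dist x' y' * (tf a (some x') * tf a (some y')) := by ring
      _ ≤ dist x' y' * ((2 * (M - S)) * (2 * (M - S))) :=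
          mul_le_mul_of_nonneg_left h1 hd0
      _ = 4 * ((M - S) * (M - S) * dist x' y') := by ring
      _ ≤ 4 * S := by linarith

lemma chainSum_concat : ∀ (l : List (Option X)) (x u v : Option X),
    (x :: l).getLast? = some u →
    chainSum a ((x :: l) ++ [v]) = chainSum a (x :: l) + da a u v
  | [], x, u, v, h => by
      simp only [List.getLast?_singleton, Option.some.injEq] at h
      subst h; simp
  | z :: l, x, u, v, h => by
      rw [List.getLast?_cons_cons] at h
      have IH := chainSum_concat l z u v h
      simp only [List.cons_append] at IH ⊢
      rw [chainSum_cons, chainSum_cons, IH]; ring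

lemma chainSum_append : ∀ (l₁ : List (Option X)) (x y : Option X) (l₂ : List (Option X)),
    (x :: l₁).getLast? = some y →
    chainSum a ((x :: l₁) ++ l₂) = chainSum a (x :: l₁) + chainSum a (y :: l₂)
  | [], x, y, l₂, h => by
      simp only [List.getLast?_singleton, Option.some.injEq] at h
      subst h; simp
  | z :: l₁, x, y, l₂, h => by
      rw [List.getLast?_cons_cons] at h
      have IH := chainSum_append l₁ z y l₂ h
      simp only [List.cons_append] at IH ⊢
      rw [chainSum_cons, chainSum_cons, IH]; ring

/-- Reversal of chains. -/
lemma chain_reverse : ∀ (l : List (Option X)) (x y : Option X),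
    (x :: l).getLast? = some y →
    ∃ m : List (Option X), (y :: m).getLast? = some x ∧
      chainSum a (y :: m) = chainSum a (x :: l)
  | [], x, y, h => by
      simp only [List.getLast?_singleton, Option.some.injEq] at h
      subst h; exact ⟨[], by simp, rfl⟩
  | z :: l, x, y, h => by
      rw [List.getLast?_cons_cons] at h
      obtain ⟨m, hm1, hm2⟩ := chain_reverse l z y h
      refine ⟨m ++ [x], ?_, ?_⟩
      · rw [show y :: (m ++ [x]) = (y :: m) ++ [x] by simp, List.getLast?_concat]
      · rw [show y :: (m ++ [x]) = (y :: m) ++ [x] by simp,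
          chainSum_concat a m y z x hm1, hm2, chainSum_cons, da_symm a z x]
        ring

lemma dhat_nonempty (x y : Option X) :
    Set.Nonempty { s | ∃ l : List (Option X),
      (x :: l).getLast? = some y ∧ s = chainSum a (x :: l) } :=
  ⟨chainSum a [x, y], [y], by simp, rfl⟩

lemma dhat_bddBelow (x y : Option X) :
    BddBelow { s | ∃ l : List (Option X),
      (x :: l).getLast? = some y ∧ s = chainSum a (x :: l) } := by
  refine ⟨0, fun s hs => ?_⟩
  obtain ⟨l, _, rfl⟩ := hs
  exact chainSum_nonneg a _

lemma dhat_le_da (x y : Option X) : dhat a x y ≤ da a x y := by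
  have : da a x y ∈ { s | ∃ l : List (Option X),
      (x :: l).getLast? = some y ∧ s = chainSum a (x :: l) } :=
    ⟨[y], by simp, by simp⟩
  exact csInf_le (dhat_bddBelow a x y) this

lemma da_le_four_dhat (x y : Option X) : 4⁻¹ * da a x y ≤ dhat a x y := by
  apply le_csInf (dhat_nonempty a x y)
  rintro s ⟨l, hl, rfl⟩
  have := da_le_four_chainSum a l x y hl
  linarith

end Aux

/-- The chain construction `d̂_a` on the one-point compactification of an
unbounded metric space is a metric, and it is comparable to the
sphericalization quasimetric: `(1/4) d_a ≤ d̂_a ≤ d_a`. -/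
theorem dhat_is_metric_and_comparable {X : Type*} [MetricSpace X]
    (hunb : ¬ Bornology.IsBounded (Set.univ : Set X)) (a : X) :
    (∀ x : Option X, dhat a x x = 0) ∧
    (∀ x y : Option X, dhat a x y = dhat a y x) ∧
    (∀ x y z : Option X, dhat a x z ≤ dhat a x y + dhat a y z) ∧
    (∀ x y : Option X, dhat a x y = 0 → x = y) ∧
    (∀ x y : Option X, 4⁻¹ * da a x y ≤ dhat a x y ∧ dhat a x y ≤ da a x y) := by
  have hself : ∀ x : Option X, dhat a x x = 0 := by
    intro x
    have h1 := dhat_le_da a x x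
    have h2 := da_le_four_dhat a x x
    rw [da_self] at h1 h2
    linarith
  have hsymm : ∀ x y : Option X, dhat a x y = dhat a y x := by
    have key : ∀ x y : Option X, dhat a y x ≤ dhat a x y := by
      intro x y
      apply le_csInf (dhat_nonempty a x y)
      rintro s ⟨l, hl, rfl⟩
      obtain ⟨m, hm1, hm2⟩ := chain_reverse a l x y hl
      rw [← hm2]
      exact csInf_le (dhat_bddBelow a y x) ⟨m, hm1, rfl⟩
    exact fun x y => le_antisymm (key y x) (key x y)
  have htri : ∀ x y z : Option X, dhat a x z ≤ dhat a x y + dhat a y z := by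
    intro x y z
    have key : ∀ s₁ ∈ { s | ∃ l : List (Option X),
        (x :: l).getLast? = some y ∧ s = chainSum a (x :: l) },
        ∀ s₂ ∈ { s | ∃ l : List (Option X),
        (y :: l).getLast? = some z ∧ s = chainSum a (y :: l) },
        dhat a x z ≤ s₁ + s₂ := by
      rintro s₁ ⟨l₁, hl₁, rfl⟩ s₂ ⟨l₂, hl₂, rfl⟩
      have happ := chainSum_append a l₁ x y l₂ hl₁
      have hlast : ((x :: l₁) ++ l₂).getLast? = some z := by
        match l₂, hl₂ with
        | [], hl₂ =>
          simp only [List.getLast?_singleton, Option.some.injEq] at hl₂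
          subst hl₂; simpa using hl₁
        | w :: l₂, hl₂ =>
          rw [List.getLast?_cons_cons] at hl₂
          rw [List.getLast?_append_of_ne_nil _ (by simp)]
          exact hl₂
      have hmem : chainSum a (x :: l₁) + chainSum a (y :: l₂) ∈
          { s | ∃ l : List (Option X),
            (x :: l).getLast? = some z ∧ s = chainSum a (x :: l) } := by
        refine ⟨l₁ ++ l₂, ?_, ?_⟩
        · simpa using hlast
        · rw [show x :: (l₁ ++ l₂) = (x :: l₁) ++ l₂ by simp, happ]
      exact csInf_le (dhat_bddBelow a x z) hmem
    have step1 : ∀ s₂ ∈ { s | ∃ l : List (Option X),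
        (y :: l).getLast? = some z ∧ s = chainSum a (y :: l) },
        dhat a x z - s₂ ≤ dhat a x y := by
      intro s₂ hs₂
      apply le_csInf (dhat_nonempty a x y)
      intro s₁ hs₁
      linarith [key s₁ hs₁ s₂ hs₂]
    have step2 : dhat a x z - dhat a x y ≤ dhat a y z := by
      apply le_csInf (dhat_nonempty a y z)
      intro s₂ hs₂
      linarith [step1 s₂ hs₂]
    linarith
  have hsep : ∀ x y : Option X, dhat a x y = 0 → x = y := by
    intro x y h
    have h2 := da_le_four_dhat a x y
    rw [h] at h2
    have h3 := da_nonneg a x y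
    exact da_eq_zero a x y (le_antisymm (by linarith) h3)
  exact ⟨hself, hsymm, htri, hsep, fun x y =>
    ⟨da_le_four_dhat a x y, dhat_le_da a x y⟩⟩
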